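/- Let α>0. Assume that e^{λ₁x^α}·F̄(x)→∞ as x→∞ for some λ₁>0, and that Ḡ(x)>0 for all x≥0. Then for every distribution V satisfying e^{λ₀x^α}·V̄(x)→0 as x→∞ for some λ₀>0, and for every c>0, one has V̄(cx)=o(H̄(x)) as x→∞, where H is the product convolution of F and G. -/
import Mathlib


open MeasureTheory ProbabilityTheory Filter Topology Asymptotics Set

noncomputable section

/-- The tail `P(X > x)` of a random variable `X` (as a real number). -/
def rvTail {Ω : Type*} [MeasurableSpace Ω] (μ : Measure Ω) (X : Ω → ℝ) (x : ℝ) : ℝ :=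
  (μ {ω | x < X ω}).toReal

/-- The tail `V̄(x) = V((x,∞))` of a distribution (probability measure) on `ℝ`. -/
def mTail (V : Measure ℝ) (x : ℝ) : ℝ := (V (Ioi x)).toReal

/-- The long-tailed class `ℒ`, described via the tail function:
`T̄(x) > 0` for all `x` and `T(x - t) ∼ T(x)` for each `t > 0`. -/
def IsLongTail (T : ℝ → ℝ) : Prop :=
  (∀ x, 0 < T x) ∧ ∀ t > 0, Tendsto (fun x => T (x - t) / T x) atTop (𝓝 1)

/-- The exponential class `ℒ(γ)`, described via the tail function:
`T(x) > 0` for all `x` and `T(x - t) ∼ e^{γ t} T(x)` for each real `t`. -/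
def IsLgamma (γ : ℝ) (T : ℝ → ℝ) : Prop :=
  (∀ x, 0 < T x) ∧ ∀ t : ℝ, Tendsto (fun x => T (x - t) / T x) atTop (𝓝 (Real.exp (γ * t)))

/-- The generalized long-tailed class `𝒪ℒ`, described via the tail function:
`T(x) > 0` for all `x` and `limsup_{x→∞} T(x - t)/T(x) < ∞` for each `t > 0`. -/
def IsOL (T : ℝ → ℝ) : Prop :=
  (∀ x, 0 < T x) ∧ ∀ t > 0, IsBoundedUnder (· ≤ ·) atTop (fun x => T (x - t) / T x)

/-- `C^*(T, t) = limsup_{x→∞} T(x-t)/T(x)`. -/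
def Cstar (T : ℝ → ℝ) (t : ℝ) : ℝ := Filter.limsup (fun x => T (x - t) / T x) atTop

/-- `C_*(T, t) = liminf_{x→∞} T(x-t)/T(x)`. -/
def Cflat (T : ℝ → ℝ) (t : ℝ) : ℝ := Filter.liminf (fun x => T (x - t) / T x) atTop

/-- if `e^{λ₁ x^α} F̄(x) → ∞` for some `λ₁ > 0` and `Ḡ > 0` on `[0,∞)`,
then for every distribution `V` with `e^{λ₀ x^α} V̄(x) → 0` for some `λ₀ > 0`, and every
`c > 0`, `V̄(cx) = o(H̄(x))`. -/
theorem stmt_10 {Ω : Type*} [MeasurableSpace Ω] (μ : Measure Ω) [IsProbabilityMeasure μ]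
    (X Y : Ω → ℝ) (hXm : Measurable X) (hYm : Measurable Y)
    (hXnn : ∀ ω, 0 ≤ X ω) (hYnn : ∀ ω, 0 ≤ Y ω)
    (hindep : IndepFun X Y μ)
    (α : ℝ) (hα : 0 < α)
    (h1 : ∃ l₁ > (0:ℝ), Tendsto (fun x => Real.exp (l₁ * x ^ α) * rvTail μ X x) atTop atTop)
    (hGpos : ∀ x ≥ (0:ℝ), 0 < rvTail μ Y x) :
    ∀ (V : Measure ℝ), IsProbabilityMeasure V →
      (∃ l₀ > (0:ℝ), Tendsto (fun x => Real.exp (l₀ * x ^ α) * mTail V x) atTop (𝓝 0)) →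
      ∀ c > (0:ℝ),
        (fun x => mTail V (c * x)) =o[atTop] (rvTail μ (fun ω => X ω * Y ω)) := by

  intro V _hVprob h0 c hc
  obtain ⟨l₀, hl₀, hV0⟩ := h0
  obtain ⟨l₁, hl₁, hF⟩ := h1
  have hcα : (0:ℝ) < c ^ α := Real.rpow_pos_of_pos hc α
  obtain ⟨b, hb1, hbα⟩ : ∃ b : ℝ, 1 ≤ b ∧ l₁ / (l₀ * c ^ α) < b ^ α :=
    ((eventually_ge_atTop 1).and
      ((tendsto_rpow_atTop hα).eventually_gt_atTop (l₁ / (l₀ * c ^ α)))).exists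
  have hb0 : (0:ℝ) < b := lt_of_lt_of_le one_pos hb1
  have hbαpos : (0:ℝ) < b ^ α := Real.rpow_pos_of_pos hb0 α
  set K := rvTail μ Y b with hKdef
  have hK : 0 < K := hGpos b hb0.le
  have hkey : l₁ / b ^ α ≤ l₀ * c ^ α := by
    rw [div_le_iff₀ hbαpos]
    have := (div_lt_iff₀ (by positivity)).mp hbα
    nlinarith
  set g : ℝ → ℝ := fun x => K * Real.exp (-(l₁ / b ^ α) * x ^ α) with hgdef
  -- key product-tail lower bound
  have hprod : ∀ x : ℝ, 0 ≤ x →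
      rvTail μ X (x / b) * K ≤ rvTail μ (fun ω => X ω * Y ω) x := by
    intro x hx
    have hset : X ⁻¹' Ioi (x / b) ∩ Y ⁻¹' Ioi b ⊆ {ω | x < X ω * Y ω} := by
      intro ω hω
      obtain ⟨h1', h2'⟩ := hω
      simp only [mem_preimage, mem_Ioi] at h1' h2'
      have : x / b * b < X ω * Y ω :=
        mul_lt_mul h1' h2'.le hb0 (hXnn ω)
      rwa [div_mul_cancel₀ x hb0.ne'] at this
    have heq : μ (X ⁻¹' Ioi (x / b) ∩ Y ⁻¹' Ioi b)
        = μ (X ⁻¹' Ioi (x / b)) * μ (Y ⁻¹' Ioi b) :=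
      hindep.measure_inter_preimage_eq_mul _ _ measurableSet_Ioi measurableSet_Ioi
    calc rvTail μ X (x / b) * K
        = ((μ (X ⁻¹' Ioi (x / b))) * (μ (Y ⁻¹' Ioi b))).toReal := by
          rw [ENNReal.toReal_mul]; rfl
      _ = (μ (X ⁻¹' Ioi (x / b) ∩ Y ⁻¹' Ioi b)).toReal := by rw [heq]
      _ ≤ (μ {ω | x < X ω * Y ω}).toReal :=
          ENNReal.toReal_mono (measure_ne_top μ _) (measure_mono hset)
  -- step B : g is eventually bounded by the product tail
  have hFb : Tendsto (fun x => x / b) atTop atTop :=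
    tendsto_id.atTop_div_const hb0
  have hFev : ∀ᶠ x : ℝ in atTop,
      Real.exp (-(l₁ * (x / b) ^ α)) ≤ rvTail μ X (x / b) := by
    filter_upwards [hFb.eventually (hF.eventually_ge_atTop 1)] with x hx
    have hexp : (0:ℝ) < Real.exp (l₁ * (x / b) ^ α) := Real.exp_pos _
    rw [Real.exp_neg, inv_le_iff_one_le_mul₀ hexp]
    linarith [hx]
  have hB : ∀ᶠ x : ℝ in atTop, g x ≤ rvTail μ (fun ω => X ω * Y ω) x := by
    filter_upwards [hFev, eventually_ge_atTop (0:ℝ)] with x hFx hx0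
    have hdiv : (x / b) ^ α = x ^ α / b ^ α := Real.div_rpow hx0 hb0.le α
    have h1' : g x ≤ rvTail μ X (x / b) * K := by
      rw [hgdef]
      simp only
      rw [mul_comm K]
      apply mul_le_mul_of_nonneg_right _ hK.le
      calc Real.exp (-(l₁ / b ^ α) * x ^ α)
          = Real.exp (-(l₁ * (x / b) ^ α)) := by rw [hdiv]; ring_nf
        _ ≤ rvTail μ X (x / b) := hFx
    exact h1'.trans (hprod x hx0)
  -- step A : mTail V (c x) =o g
  have hA : (fun x => mTail V (c * x)) =o[atTop] g := by
    rw [isLittleO_iff]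
    intro ε hε
    have hcx : Tendsto (fun x : ℝ => c * x) atTop atTop :=
      tendsto_id.const_mul_atTop hc
    have hVev : ∀ᶠ x : ℝ in atTop,
        Real.exp (l₀ * (c * x) ^ α) * mTail V (c * x) < ε * K :=
      (hcx.eventually (hV0.eventually_lt_const (by positivity)))
    filter_upwards [hVev, eventually_ge_atTop (0:ℝ)] with x hVx hx0
    have hmul : (c * x) ^ α = c ^ α * x ^ α := Real.mul_rpow hc.le hx0
    have hVnn : 0 ≤ mTail V (c * x) := ENNReal.toReal_nonneg
    have hepos : (0:ℝ) < Real.exp (l₀ * (c * x) ^ α) := Real.exp_pos _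
    have h2 : mTail V (c * x) ≤ ε * K * Real.exp (-(l₀ * (c * x) ^ α)) := by
      rw [Real.exp_neg, mul_comm (ε * K), ← div_eq_inv_mul, le_div_iff₀ hepos,
        mul_comm (mTail V (c * x))]
      exact hVx.le
    have h3 : Real.exp (-(l₀ * (c * x) ^ α)) ≤ Real.exp (-(l₁ / b ^ α) * x ^ α) := by
      apply Real.exp_le_exp.mpr
      rw [hmul]
      have hxα : (0:ℝ) ≤ x ^ α := Real.rpow_nonneg hx0 α
      nlinarith [hkey]
    have hgpos : 0 < g x := by positivity
    rw [Real.norm_eq_abs, Real.norm_eq_abs, abs_of_nonneg hVnn, abs_of_nonneg hgpos.le]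
    calc mTail V (c * x) ≤ ε * K * Real.exp (-(l₀ * (c * x) ^ α)) := h2
      _ ≤ ε * K * Real.exp (-(l₁ / b ^ α) * x ^ α) := by
          apply mul_le_mul_of_nonneg_left h3 (by positivity)
      _ = ε * g x := by rw [hgdef]; ring
  -- combine
  refine hA.trans_isBigO (Asymptotics.IsBigO.of_bound 1 ?_)
  filter_upwards [hB] with x hx
  have hgpos : 0 < g x := by positivity
  have hHnn : 0 ≤ rvTail μ (fun ω => X ω * Y ω) x := ENNReal.toReal_nonneg
  rw [Real.norm_eq_abs, Real.norm_eq_abs, abs_of_nonneg hgpos.le, abs_of_nonneg hHnn, one_mul]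
  exact hx
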